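/- Let f, g, h ∈ ℤ[X] with g·h ≢ 0, let (a_n)_{n∈ℕ} = a(f,g,h), and let b, c be integers such that a_n = c·b^n for all sufficiently large n. Then b ≠ 0, c ≠ 0, and the polynomial identity b·g = c·b − c·f holds in ℤ[X] (equivalently, g = c − (c/b)·f). -/

import Mathlib

open Polynomial Filter Finset

section Helpers

lemma evNe {p : Polynomial ℤ} (hp : p ≠ 0) : ∀ᶠ n : ℕ in atTop, p.eval (n : ℤ) ≠ 0 := by
  have hfin : {x : ℤ | p.IsRoot x}.Finite := Polynomial.finite_setOf_isRoot hp
  have h2 : {n : ℕ | p.eval (n : ℤ) = 0}.Finite :=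
    Set.Finite.preimage (Set.injOn_of_injective Nat.cast_injective) hfin
  have := h2.eventually_cofinite_notMem
  rw [Nat.cofinite_eq_atTop] at this
  simpa using this

lemma evalBound (p : Polynomial ℤ) (n : ℤ) (hn : 1 ≤ n) :
    |p.eval n| ≤ (∑ i ∈ Finset.range (p.natDegree + 1), |p.coeff i|) * n ^ p.natDegree := by
  rw [Polynomial.eval_eq_sum_range]
  calc |∑ i ∈ Finset.range (p.natDegree + 1), p.coeff i * n ^ i|
      ≤ ∑ i ∈ Finset.range (p.natDegree + 1), |p.coeff i * n ^ i| :=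
        Finset.abs_sum_le_sum_abs _ _
    _ = ∑ i ∈ Finset.range (p.natDegree + 1), |p.coeff i| * n ^ i := by
        simp [abs_mul, abs_pow, abs_of_nonneg (by linarith : (0:ℤ) ≤ n)]
    _ ≤ ∑ i ∈ Finset.range (p.natDegree + 1), |p.coeff i| * n ^ p.natDegree := by
        refine Finset.sum_le_sum fun i hi => ?_
        exact mul_le_mul_of_nonneg_left
          (pow_le_pow_right₀ hn (Nat.lt_succ_iff.mp (Finset.mem_range.mp hi))) (abs_nonneg _)
    _ = _ := (Finset.sum_mul _ _ _).symm

lemma growth (p : Polynomial ℤ) (A B : ℤ) (hA : 0 ≤ A) (hAB : A < B) :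
    ∀ᶠ n : ℕ in atTop, |p.eval (n : ℤ)| * A ^ n < B ^ n := by
  have hB : (0:ℝ) < (B:ℝ) := by exact_mod_cast lt_of_le_of_lt hA hAB
  set C : ℤ := ∑ i ∈ Finset.range (p.natDegree + 1), |p.coeff i| with hC
  have hr : ‖(A:ℝ)/(B:ℝ)‖ < 1 := by
    rw [Real.norm_eq_abs, abs_of_nonneg (by positivity)]
    rw [div_lt_one hB]; exact_mod_cast hAB
  have hlim : Tendsto (fun n : ℕ => (C:ℝ) * ((n:ℝ) ^ p.natDegree * ((A:ℝ)/(B:ℝ)) ^ n))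
      atTop (nhds 0) := by
    have := (summable_pow_mul_geometric_of_norm_lt_one p.natDegree hr).tendsto_atTop_zero
    simpa using this.const_mul (C:ℝ)
  have hev : ∀ᶠ n : ℕ in atTop, (C:ℝ) * ((n:ℝ) ^ p.natDegree * ((A:ℝ)/(B:ℝ)) ^ n) < 1 :=
    hlim.eventually_lt_const one_pos
  filter_upwards [hev, eventually_ge_atTop 1] with n h1 hn1
  have hn1' : (1:ℤ) ≤ (n:ℤ) := by exact_mod_cast hn1
  have hb1 := evalBound p n hn1'
  -- real inequality: C * n^d * A^n < B^n
  have hAn : (0:ℝ) ≤ (A:ℝ)^n := by positivity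
  have key : ((C:ℝ) * (n:ℝ) ^ p.natDegree) * (A:ℝ)^n < (B:ℝ)^n := by
    have hBn : (0:ℝ) < (B:ℝ)^n := by positivity
    have heq : ((C:ℝ) * (n:ℝ) ^ p.natDegree) * (A:ℝ)^n
        = ((C:ℝ) * ((n:ℝ) ^ p.natDegree * ((A:ℝ)/(B:ℝ)) ^ n)) * (B:ℝ)^n := by
      field_simp
      rw [div_pow, mul_div_assoc', div_mul_cancel₀ _ (ne_of_gt hBn)]
    rw [heq]
    calc _ < 1 * (B:ℝ)^n := by exact mul_lt_mul_of_pos_right h1 hBn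
      _ = (B:ℝ)^n := one_mul _
  have hfin : ((|p.eval (n:ℤ)| * A ^ n : ℤ) : ℝ) < ((B ^ n : ℤ) : ℝ) := by
    push_cast
    refine lt_of_le_of_lt (mul_le_mul_of_nonneg_right ?_ hAn) key
    have : ((|p.eval (n:ℤ)| : ℤ) : ℝ) ≤ ((C * (n:ℤ) ^ p.natDegree : ℤ) : ℝ) := by
      exact_mod_cast hb1
    push_cast at this
    convert this using 2
  exact_mod_cast hfin


lemma infEq {p q : Polynomial ℤ} (h : {n : ℕ | p.eval (n:ℤ) = q.eval (n:ℤ)}.Infinite) :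
    p = q := by
  apply Polynomial.eq_of_infinite_eval_eq
  have h2 := h.image (Set.injOn_of_injective (Nat.cast_injective (R := ℤ)))
  refine h2.mono ?_
  rintro x ⟨n, hn, rfl⟩
  exact hn

end Helpers

/-- The sequence a(f,g,h): a₀ = g(0), aₙ = f(n)·aₙ₋₁ + g(n)·h(n)ⁿ for n ≥ 1. -/
def seqA (f g h : Polynomial ℤ) : ℕ → ℤ
  | 0 => g.eval 0
  | n + 1 => f.eval ((n : ℤ) + 1) * seqA f g h n +
      g.eval ((n : ℤ) + 1) * (h.eval ((n : ℤ) + 1)) ^ (n + 1)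

theorem stmt_4 (f g h : Polynomial ℤ) (hgh : g * h ≠ 0) (b c : ℤ)
    (hev : ∃ N : ℕ, ∀ n : ℕ, N ≤ n → seqA f g h n = c * b ^ n) :
    b ≠ 0 ∧ c ≠ 0 ∧ Polynomial.C b * g = Polynomial.C (c * b) - Polynomial.C c * f := by
  obtain ⟨N, hN⟩ := hev
  have hg : g ≠ 0 := left_ne_zero_of_mul hgh
  have hh : h ≠ 0 := right_ne_zero_of_mul hgh
  have key : ∀ n : ℕ, N ≤ n → g.eval ((n:ℤ)+1) * (h.eval ((n:ℤ)+1))^(n+1)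
      = c * b^(n+1) - f.eval ((n:ℤ)+1) * (c * b^n) := by
    intro n hn
    have h2 := hN (n+1) (le_trans hn (Nat.le_succ n))
    rw [show seqA f g h (n+1) = f.eval ((n:ℤ)+1) * seqA f g h n +
        g.eval ((n:ℤ)+1) * (h.eval ((n:ℤ)+1))^(n+1) from rfl, hN n hn] at h2
    linarith
  obtain ⟨M0, hM0⟩ := eventually_atTop.mp ((evNe hg).and (evNe hh))
  -- b ≠ 0 and c ≠ 0
  have hbc : c * b ≠ 0 := by
    intro h0
    set m := max N M0 with hm
    have hk := key (m+1) (le_trans (le_max_left _ _) (Nat.le_succ m))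
    have hnz := hM0 (m+2) (by omega)
    push_cast at hnz hk
    have : g.eval ((m:ℤ)+1+1) * (h.eval ((m:ℤ)+1+1))^(m+1+1) = 0 := by
      rw [hk]; linear_combination (b^(m+1) - f.eval ((m:ℤ)+1+1) * b^m) * h0
    exact mul_ne_zero hnz.1 (pow_ne_zero _ hnz.2) this
  have hb : b ≠ 0 := fun h0 => hbc (by simp [h0])
  have hc : c ≠ 0 := fun h0 => hbc (by simp [h0])
  refine ⟨hb, hc, ?_⟩
  set p : Polynomial ℤ := Polynomial.C b * g with hpdef
  set q : Polynomial ℤ := Polynomial.C (c*b) - Polynomial.C c * f with hqdef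
  have E : ∀ n : ℕ, N+1 ≤ n → p.eval (n:ℤ) * (h.eval (n:ℤ))^n = q.eval (n:ℤ) * b^n := by
    intro n hn
    obtain ⟨k, rfl⟩ : ∃ k, n = k+1 := ⟨n-1, by omega⟩
    have hk := key k (by omega)
    push_cast
    simp only [hpdef, hqdef, Polynomial.eval_mul, Polynomial.eval_sub, Polynomial.eval_C]
    linear_combination b * hk
  have hp : p ≠ 0 := mul_ne_zero (Polynomial.C_ne_zero.mpr hb) hg
  obtain ⟨Mp, hMp⟩ := eventually_atTop.mp (evNe hp)
  obtain ⟨Mh, hMh⟩ := eventually_atTop.mp (evNe hh)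
  have hq : q ≠ 0 := by
    intro h0
    set n := max (N+1) (max Mp Mh) with hn
    have e := E n (le_max_left _ _)
    rw [h0] at e
    simp only [Polynomial.eval_zero, zero_mul] at e
    exact mul_ne_zero (hMp n (by omega)) (pow_ne_zero _ (hMh n (by omega))) e
  obtain ⟨Mq, hMq⟩ := eventually_atTop.mp (evNe hq)
  obtain ⟨G1, hG1⟩ := eventually_atTop.mp (growth q |b| (|b|+1) (abs_nonneg _) (lt_add_one _))
  obtain ⟨G2, hG2⟩ := eventually_atTop.mp
    (growth p (|b|-1) |b| (by have := Int.one_le_abs hb; omega) (sub_one_lt _))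
  set BIG := max (N+1) (max (max Mp Mq) (max Mh (max G1 G2))) with hBIG
  have habs : ∀ n : ℕ, BIG ≤ n → h.eval (n:ℤ) = b ∨ h.eval (n:ℤ) = -b := by
    intro n hn
    have e := E n (by omega)
    have e2 : |p.eval (n:ℤ)| * |h.eval (n:ℤ)|^n = |q.eval (n:ℤ)| * |b|^n := by
      rw [← abs_pow, ← abs_mul, e, abs_mul, abs_pow]
    have hp1 : 1 ≤ |p.eval (n:ℤ)| := Int.one_le_abs (hMp n (by omega))
    have hq1 : 1 ≤ |q.eval (n:ℤ)| := Int.one_le_abs (hMq n (by omega))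
    have hh1 : 1 ≤ |h.eval (n:ℤ)| := Int.one_le_abs (hMh n (by omega))
    rcases lt_trichotomy |h.eval (n:ℤ)| |b| with hlt | heq | hgt
    · exfalso
      have c1 : |b|^n ≤ |q.eval (n:ℤ)| * |b|^n :=
        le_mul_of_one_le_left (pow_nonneg (abs_nonneg _) _) hq1
      have c2 : |p.eval (n:ℤ)| * |h.eval (n:ℤ)|^n ≤ |p.eval (n:ℤ)| * (|b|-1)^n :=
        mul_le_mul_of_nonneg_left (pow_le_pow_left₀ (abs_nonneg _) (by omega) n)
          (abs_nonneg _)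
      have c3 := hG2 n (by omega)
      linarith
    · rcases abs_eq_abs.mp heq with h1 | h1
      · exact Or.inl h1
      · exact Or.inr h1
    · exfalso
      have c1 : (|b|+1)^n ≤ |p.eval (n:ℤ)| * |h.eval (n:ℤ)|^n := by
        calc (|b|+1)^n ≤ |h.eval (n:ℤ)|^n := pow_le_pow_left₀ (by positivity) (by omega) n
          _ ≤ _ := le_mul_of_one_le_left (pow_nonneg (abs_nonneg _) _) hp1
      have c2 := hG1 n (by omega)
      linarith
  -- h = C b or h = C (-b)
  have hinf : {n : ℕ | h.eval (n:ℤ) = b}.Infinite ∨ {n : ℕ | h.eval (n:ℤ) = -b}.Infinite := by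
    by_contra hcon
    push_neg at hcon
    have : (Set.Ici BIG : Set ℕ).Infinite := Set.Ici_infinite BIG
    exact this ((hcon.1.union hcon.2).subset fun n hn => habs n hn)
  have hPQ : ∀ n : ℕ, N+1 ≤ n → h.eval (n:ℤ) = b →
      p.eval (n:ℤ) = q.eval (n:ℤ) := by
    intro n hn hb'
    have e := E n hn
    rw [hb'] at e
    exact mul_right_cancel₀ (pow_ne_zero _ hb) e
  rcases hinf with hS | hS
  · -- h = C b
    have hhb : h = Polynomial.C b := infEq (by simpa using hS)
    have : {n : ℕ | p.eval (n:ℤ) = q.eval (n:ℤ)}.Infinite := by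
      refine (Set.Ici_infinite (N+1)).mono fun n hn => ?_
      exact hPQ n hn (by rw [hhb]; simp)
    exact infEq this
  · -- h = C (-b) ; derive contradiction
    exfalso
    have hhb : h = Polynomial.C (-b) := infEq (by simpa using hS)
    have Ealt : ∀ n : ℕ, N+1 ≤ n → p.eval (n:ℤ) * (-1)^n = q.eval (n:ℤ) := by
      intro n hn
      have e := E n hn
      rw [hhb] at e
      simp only [Polynomial.eval_C] at e
      rw [neg_pow] at e
      have : (p.eval (n:ℤ) * (-1)^n) * b^n = q.eval (n:ℤ) * b^n := by
        rw [← e]; ring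
      exact mul_right_cancel₀ (pow_ne_zero _ hb) this
    have h1 : p = q := by
      apply infEq
      have himg : (Set.Ici (N+1) : Set ℕ).Infinite :=  Set.Ici_infinite _
      refine (himg.image (f := fun k : ℕ => 2*k)
        (Set.injOn_of_injective (fun a b hab => by omega))).mono ?_
      rintro n ⟨k, hk, rfl⟩
      have e := Ealt (2*k) (by simp only [Set.mem_Ici] at hk; omega)
      rw [pow_mul] at e
      simpa using e
    have h2 : p = -q := by
      apply infEq
      have himg : (Set.Ici (N+1) : Set ℕ).Infinite :=  Set.Ici_infinite _
      refine (himg.image (f := fun k : ℕ => 2*k+1)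
        (Set.injOn_of_injective (fun a b hab => by omega))).mono ?_
      rintro n ⟨k, hk, rfl⟩
      have e := Ealt (2*k+1) (by simp only [Set.mem_Ici] at hk; omega)
      rw [pow_succ, pow_mul] at e
      simp at e
      simp only [Set.mem_setOf_eq, Polynomial.eval_neg]
      push_cast
      omega
    have h3 : q = -q := h1 ▸ h2
    have hx := hMq Mq le_rfl
    have h4 : q.eval (Mq:ℤ) = - q.eval (Mq:ℤ) := by
      nth_rewrite 1 [h3]; simp
    omega
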